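/- The 3×3 matrix A = [[1,-1,-2],[-1,1,0],[0,0,1]] is a semimonotone star matrix but is not an Ẽ_0^s-matrix: the vector x = (1,1,0)ᵀ solves LCP(0, A) and satisfies (Aᵀx)_3 = -2 ≠ 0 while (Ax)_3 = 0. -/

import Mathlib

/-- A is semimonotone (E₀). -/
def IsSemimonotone {n : ℕ} (A : Matrix (Fin n) (Fin n) ℝ) : Prop :=
  ∀ x : Fin n → ℝ, 0 ≤ x → x ≠ 0 → ∃ i, 0 < x i ∧ 0 ≤ A.mulVec x i

/-- A is semimonotone star (E₀ˢ). -/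
def IsSemimonotoneStar {n : ℕ} (A : Matrix (Fin n) (Fin n) ℝ) : Prop :=
  IsSemimonotone A ∧
    ∀ x : Fin n → ℝ, 0 ≤ x → 0 ≤ A.mulVec x → dotProduct x (A.mulVec x) = 0 →
      A.transpose.mulVec x ≤ 0

/-- A is an Ẽ₀ˢ-matrix. -/
def IsE0sTilde {n : ℕ} (A : Matrix (Fin n) (Fin n) ℝ) : Prop :=
  IsSemimonotoneStar A ∧
    ∀ x : Fin n → ℝ, 0 ≤ x → 0 ≤ A.mulVec x → dotProduct x (A.mulVec x) = 0 →
      ∀ i, A.transpose.mulVec x i ≠ 0 → A.mulVec x i ≠ 0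

theorem stmt10 :
    IsSemimonotoneStar !![(1 : ℝ), -1, -2; -1, 1, 0; 0, 0, 1] ∧
      ¬ IsE0sTilde !![(1 : ℝ), -1, -2; -1, 1, 0; 0, 0, 1] ∧
      (0 ≤ (![1, 1, 0] : Fin 3 → ℝ) ∧
        0 ≤ (!![(1 : ℝ), -1, -2; -1, 1, 0; 0, 0, 1]).mulVec ![1, 1, 0] ∧
        dotProduct (![1, 1, 0] : Fin 3 → ℝ)
          ((!![(1 : ℝ), -1, -2; -1, 1, 0; 0, 0, 1]).mulVec ![1, 1, 0]) = 0) ∧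
      (!![(1 : ℝ), -1, -2; -1, 1, 0; 0, 0, 1]).transpose.mulVec ![1, 1, 0] 2 = -2 ∧
      (!![(1 : ℝ), -1, -2; -1, 1, 0; 0, 0, 1]).mulVec ![1, 1, 0] 2 = 0 := by
  have hstar : IsSemimonotoneStar !![(1 : ℝ), -1, -2; -1, 1, 0; 0, 0, 1] := by
    constructor
    · intro x hx hx0
      have h0 : (0:ℝ) ≤ x 0 := hx 0
      have h1 : (0:ℝ) ≤ x 1 := hx 1
      have h2 : (0:ℝ) ≤ x 2 := hx 2
      rcases lt_or_eq_of_le h2 with h2' | h2'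
      · refine ⟨2, h2', ?_⟩
        simp [Matrix.mulVec, dotProduct, Fin.sum_univ_three]
        linarith
      · rcases le_or_gt (x 1) (x 0) with h | h
        · have hx0' : 0 < x 0 := by
            rcases lt_or_eq_of_le h0 with h' | h'
            · exact h'
            · exfalso
              apply hx0
              funext i
              fin_cases i <;> simp <;> linarith
          refine ⟨0, hx0', ?_⟩
          simp [Matrix.mulVec, dotProduct, Fin.sum_univ_three]
          linarith
        · refine ⟨1, by linarith, ?_⟩
          simp [Matrix.mulVec, dotProduct, Fin.sum_univ_three]
          linarith
    · intro x hx hAx _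
      have h0 : (0:ℝ) ≤ x 0 := hx 0
      have h2 : (0:ℝ) ≤ x 2 := hx 2
      have hA0 := hAx 0
      have hA1 := hAx 1
      simp [Matrix.mulVec, dotProduct, Fin.sum_univ_three] at hA0 hA1
      intro i
      fin_cases i <;>
        simp [Matrix.mulVec, dotProduct, Matrix.transpose, Fin.sum_univ_three] <;>
        linarith
  have hx : (0 : Fin 3 → ℝ) ≤ ![1, 1, 0] := by
    intro i; fin_cases i <;> norm_num
  have hAx : 0 ≤ (!![(1 : ℝ), -1, -2; -1, 1, 0; 0, 0, 1]).mulVec ![1, 1, 0] := by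
    intro i
    fin_cases i <;> simp [Matrix.mulVec, dotProduct, Fin.sum_univ_three]
  have hdot : dotProduct (![1, 1, 0] : Fin 3 → ℝ)
      ((!![(1 : ℝ), -1, -2; -1, 1, 0; 0, 0, 1]).mulVec ![1, 1, 0]) = 0 := by
    simp [Matrix.mulVec, dotProduct, Fin.sum_univ_three]
  have hAt : (!![(1 : ℝ), -1, -2; -1, 1, 0; 0, 0, 1]).transpose.mulVec ![1, 1, 0] 2 = -2 := by
    simp [Matrix.mulVec, dotProduct, Matrix.transpose, Fin.sum_univ_three]
  have hA2 : (!![(1 : ℝ), -1, -2; -1, 1, 0; 0, 0, 1]).mulVec ![1, 1, 0] 2 = 0 := by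
    simp [Matrix.mulVec, dotProduct, Fin.sum_univ_three]
  refine ⟨hstar, ?_, ⟨hx, hAx, hdot⟩, hAt, hA2⟩
  rintro ⟨-, h⟩
  have := h ![1, 1, 0] hx hAx hdot 2 (by rw [hAt]; norm_num)
  exact this hA2
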